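/- Let k ⊂ K be an extension of fields, R a commutative k-algebra, and M a finitely presented R-module. If M ⊗_k K is a projective module over R ⊗_k K, then M is a projective R-module. -/

import Mathlib

open TensorProduct

/-- Descent of projectivity along a field extension `k ⊆ K`: if `R` is a commutative
`k`-algebra and `M` a finitely presented `R`-module whose base change `M ⊗_k K`, realized
as `(R ⊗[k] K) ⊗[R] M`, is projective over `R ⊗[k] K`, then `M` is projective over `R`. -/
theorem projective_of_projective_baseChange_field (k K : Type*) [Field k] [Field K]
    [Algebra k K] (R : Type*) [CommRing R] [Algebra k R]
    (M : Type*) [AddCommGroup M] [Module R M] [Module.FinitePresentation R M]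
    (h : Module.Projective (R ⊗[k] K) ((R ⊗[k] K) ⊗[R] M)) :
    Module.Projective R M := by
  -- a `k`-linear retraction of `algebraMap k K`
  obtain ⟨g, hg⟩ := (Algebra.linearMap k K).exists_leftInverse_of_injective
    (LinearMap.ker_eq_bot.mpr (algebraMap k K).injective)
  have hg1 : g 1 = 1 := by
    have := LinearMap.congr_fun hg 1
    simpa using this
  -- an `R`-linear retraction `π : R ⊗[k] K → R` with `π 1 = 1`
  let π : R ⊗[k] K →ₗ[R] R :=
    (TensorProduct.AlgebraTensorModule.rid k R R).toLinearMap ∘ₗ LinearMap.baseChange R g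
  have hπ1 : π 1 = 1 := by
    have h1 : (1 : R ⊗[k] K) = (1 : R) ⊗ₜ[k] (1 : K) := rfl
    simp [π, h1, hg1, TensorProduct.AlgebraTensorModule.rid_tmul]
  -- `M` is an `R`-linear retract of `(R ⊗[k] K) ⊗[R] M`
  let i : M →ₗ[R] (R ⊗[k] K) ⊗[R] M := TensorProduct.mk R (R ⊗[k] K) M 1
  let r : (R ⊗[k] K) ⊗[R] M →ₗ[R] M :=
    (TensorProduct.lid R M).toLinearMap ∘ₗ LinearMap.rTensor M π
  have hri : r.comp i = LinearMap.id := by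
    ext m
    simp [r, i, hπ1]
  -- `(R ⊗[k] K) ⊗[R] M` is flat over `R`
  have hfree : Module.Free R (R ⊗[k] K) := inferInstance
  have h1 : Module.Flat (R ⊗[k] K) ((R ⊗[k] K) ⊗[R] M) := Module.Flat.of_projective
  have h2 : Module.Flat R ((R ⊗[k] K) ⊗[R] M) :=
    Module.Flat.trans R (R ⊗[k] K) ((R ⊗[k] K) ⊗[R] M)
  -- hence `M` is flat over `R`
  have h3 : Module.Flat R M := Module.Flat.of_retract i r hri
  -- finitely presented + flat implies projective
  exact Module.freeLocus_eq_univ_iff.mp Module.freeLocus_eq_univ
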